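/- Let K be a field of characteristic zero and let A be the quotient of the free (noncommutative) K-algebra K⟨b,c⟩ by the two-sided ideal generated by b², c², and (b+c)². Then A is a K-vector space of dimension 4, with basis {1, b, c, bc}. -/

import Mathlib

noncomputable section
open FreeAlgebra

/-- The relations `b² = 0`, `c² = 0`, `(b+c)² = 0` on the free algebra `K⟨b,c⟩`. -/
inductive ConRel (K : Type*) [Field K] :
    FreeAlgebra K (Fin 2) → FreeAlgebra K (Fin 2) → Prop
  | rb : ConRel K ((ι K (0 : Fin 2))^2) 0
  | rc : ConRel K ((ι K (1 : Fin 2))^2) 0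
  | rbc : ConRel K ((ι K (0 : Fin 2) + ι K (1 : Fin 2))^2) 0

namespace ConRelAux

variable (K : Type*) [Field K]

/-- The matrix representing `b` in the left regular representation. -/
def Bm : Matrix (Fin 4) (Fin 4) K := !![0,0,0,0; 1,0,0,0; 0,0,0,0; 0,0,1,0]

/-- The matrix representing `c` in the left regular representation. -/
def Cm : Matrix (Fin 4) (Fin 4) K := !![0,0,0,0; 0,0,0,0; 1,0,0,0; 0,-1,0,0]

lemma Bm_sq : Bm K * Bm K = 0 := by
  ext i j
  fin_cases i <;> fin_cases j <;>
    simp [Bm, Matrix.mul_apply, Fin.sum_univ_four, Matrix.vecHead, Matrix.vecTail]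

lemma Cm_sq : Cm K * Cm K = 0 := by
  ext i j
  fin_cases i <;> fin_cases j <;>
    simp [Cm, Matrix.mul_apply, Fin.sum_univ_four, Matrix.vecHead, Matrix.vecTail]

lemma BC_sq : (Bm K + Cm K) * (Bm K + Cm K) = 0 := by
  ext i j
  fin_cases i <;> fin_cases j <;>
    simp [Bm, Cm, Matrix.mul_apply, Fin.sum_univ_four, Matrix.vecHead, Matrix.vecTail]

lemma Bm_mul_Cm : Bm K * Cm K = !![0,0,0,0; 0,0,0,0; 0,0,0,0; 1,0,0,0] := by
  ext i j
  fin_cases i <;> fin_cases j <;>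
    simp [Bm, Cm, Matrix.mul_apply, Fin.sum_univ_four, Matrix.vecHead, Matrix.vecTail]

/-- The representation `RingQuot (ConRel K) →ₐ[K] M₄(K)`. -/
def fA : RingQuot (ConRel K) →ₐ[K] Matrix (Fin 4) (Fin 4) K :=
  RingQuot.liftAlgHom K ⟨FreeAlgebra.lift K ![Bm K, Cm K], by
    rintro x y ⟨⟩ <;>
      simp only [map_pow, pow_two, map_mul, map_add, map_zero, FreeAlgebra.lift_ι_apply,
        Matrix.cons_val_zero, Matrix.cons_val_one, Matrix.head_cons]
    · exact Bm_sq K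
    · exact Cm_sq K
    · exact BC_sq K⟩

/-- Projection to the first column. -/
def col0 : Matrix (Fin 4) (Fin 4) K →ₗ[K] (Fin 4 → K) where
  toFun M i := M i 0
  map_add' _ _ := rfl
  map_smul' _ _ := rfl

def L : RingQuot (ConRel K) →ₗ[K] (Fin 4 → K) := col0 K ∘ₗ (fA K).toLinearMap

/-- The candidate basis vectors `1, b, c, bc`. -/
def v : Fin 4 → RingQuot (ConRel K) :=
  ![1, RingQuot.mkAlgHom K (ConRel K) (ι K 0), RingQuot.mkAlgHom K (ConRel K) (ι K 1),
    RingQuot.mkAlgHom K (ConRel K) (ι K 0) * RingQuot.mkAlgHom K (ConRel K) (ι K 1)]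

lemma fA_v : ∀ i, fA K (v K i) = ![1, Bm K, Cm K, Bm K * Cm K] i := by
  intro i
  fin_cases i <;>
    simp [fA, v, RingQuot.liftAlgHom_mkAlgHom_apply, Matrix.vecHead, Matrix.vecTail]

lemma hli : LinearIndependent K (v K) := by
  apply LinearIndependent.of_comp (L K)
  have h : ⇑(L K) ∘ v K = ⇑(Pi.basisFun K (Fin 4)) := by
    funext i
    have := fA_v K i
    funext j
    fin_cases i <;> fin_cases j <;>
      simp_all [L, col0, LinearMap.coe_mk, AddHom.coe_mk, Bm, Cm, Bm_mul_Cm, Matrix.one_apply, Pi.basisFun_apply,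
        Pi.single_apply, Matrix.vecHead, Matrix.vecTail] <;> rfl
  rw [h]
  exact (Pi.basisFun K (Fin 4)).linearIndependent

section relations

local notation "β" => RingQuot.mkAlgHom K (ConRel K) (ι K 0)
local notation "γ" => RingQuot.mkAlgHom K (ConRel K) (ι K 1)

lemma hbb : β * β = 0 := by
  have h := RingQuot.mkAlgHom_rel K (ConRel.rb (K := K))
  rwa [map_pow, map_zero, pow_two] at h

lemma hcc : γ * γ = 0 := by
  have h := RingQuot.mkAlgHom_rel K (ConRel.rc (K := K))
  rwa [map_pow, map_zero, pow_two] at h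

lemma hcb : γ * β = -(β * γ) := by
  have h := RingQuot.mkAlgHom_rel K (ConRel.rbc (K := K))
  rw [map_pow, map_zero, map_add, pow_two, mul_add, add_mul, add_mul, hbb, hcc,
    zero_add, add_zero] at h
  exact eq_neg_of_add_eq_zero_left h

lemma span_top : ⊤ ≤ Submodule.span K (Set.range (v K)) := by
  set S := Submodule.span K (Set.range (v K)) with hS
  have hmem : ∀ i, v K i ∈ S := fun i => Submodule.subset_span ⟨i, rfl⟩
  have h1 : (1 : RingQuot (ConRel K)) ∈ S := hmem 0
  have hb : β ∈ S := hmem 1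
  have hc : γ ∈ S := hmem 2
  have hbc : β * γ ∈ S := hmem 3
  have key : ∀ i j : Fin 4, v K i * v K j ∈ S := by
    intro i j
    fin_cases i <;> fin_cases j <;>
      simp only [v, Fin.zero_eta, Fin.mk_one, Fin.reduceFinMk, Nat.succ_eq_add_one,
        Nat.reduceAdd, Matrix.cons_val_zero, Matrix.cons_val_one, Matrix.head_cons,
        Matrix.cons_val_two, Matrix.tail_cons, Matrix.cons_val_three, one_mul, mul_one]
    · exact h1
    · exact hb
    · exact hc
    · exact hbc
    · exact hb
    · rw [hbb]; exact S.zero_mem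
    · exact hbc
    · rw [← mul_assoc, hbb, zero_mul]; exact S.zero_mem
    · exact hc
    · rw [hcb]; exact S.neg_mem hbc
    · rw [hcc]; exact S.zero_mem
    · rw [← mul_assoc, hcb, neg_mul (β * γ) γ, mul_assoc β γ γ, hcc, mul_zero β, neg_zero]
      exact S.zero_mem
    · exact hbc
    · rw [mul_assoc β γ β, hcb, mul_neg β (β * γ), ← mul_assoc β β γ, hbb, zero_mul, neg_zero]
      exact S.zero_mem
    · rw [mul_assoc, hcc, mul_zero]; exact S.zero_mem
    · rw [mul_assoc β γ (β * γ), ← mul_assoc γ β γ, hcb, neg_mul (β * γ) γ, mul_assoc β γ γ,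
        hcc, mul_zero β, neg_zero, mul_zero β]
      exact S.zero_mem
  have hmul : ∀ x y : RingQuot (ConRel K), x ∈ S → y ∈ S → x * y ∈ S := by
    intro x y hx hy
    induction hx using Submodule.span_induction with
    | mem a ha =>
      obtain ⟨i, rfl⟩ := ha
      induction hy using Submodule.span_induction with
      | mem b hb => obtain ⟨j, rfl⟩ := hb; exact key i j
      | zero => rw [mul_zero]; exact S.zero_mem
      | add y z _ _ ihy ihz => rw [mul_add]; exact S.add_mem ihy ihz
      | smul a y _ ih => rw [mul_smul_comm]; exact S.smul_mem a ih
    | zero => rw [zero_mul]; exact S.zero_mem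
    | add x z _ _ ihx ihz => rw [add_mul]; exact S.add_mem ihx ihz
    | smul a x _ ih => rw [smul_mul_assoc]; exact S.smul_mem a ih
  rintro x -
  obtain ⟨a, rfl⟩ := RingQuot.mkAlgHom_surjective K (ConRel K) x
  induction a with
  | grade0 r =>
    rw [AlgHom.commutes, Algebra.algebraMap_eq_smul_one]
    exact S.smul_mem r h1
  | grade1 x =>
    fin_cases x
    · exact hb
    · exact hc
  | mul a b iha ihb => rw [map_mul]; exact hmul _ _ iha ihb
  | add a b iha ihb => rw [map_add]; exact S.add_mem iha ihb

end relations

end ConRelAux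

/-- The contraction algebra `K⟨b,c⟩/(b², c², (b+c)²)` of the length-2 partial resolution
of the `D₄` Kleinian singularity has dimension 4, with basis `{1, b, c, bc}`. -/
theorem dim_contraction_length_two (K : Type*) [Field K] [CharZero K] :
    Module.finrank K (RingQuot (ConRel K)) = 4 ∧
    ∃ B : Module.Basis (Fin 4) K (RingQuot (ConRel K)),
      B 0 = 1 ∧
      B 1 = RingQuot.mkAlgHom K (ConRel K) (ι K 0) ∧
      B 2 = RingQuot.mkAlgHom K (ConRel K) (ι K 1) ∧
      B 3 = RingQuot.mkAlgHom K (ConRel K) (ι K 0 * ι K 1) := by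
  let B : Module.Basis (Fin 4) K (RingQuot (ConRel K)) :=
    Module.Basis.mk (ConRelAux.hli K) (ConRelAux.span_top K)
  refine ⟨?_, B, ?_, ?_, ?_, ?_⟩
  · rw [Module.finrank_eq_card_basis B, Fintype.card_fin]
  · rw [Module.Basis.mk_apply]; rfl
  · rw [Module.Basis.mk_apply]; rfl
  · rw [Module.Basis.mk_apply]; rfl
  · rw [Module.Basis.mk_apply, map_mul]; rfl

end
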